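/- arXiv:2303.16753 — 2 statements merged into one kernel-verified Lean document; each statement's English description precedes it below -/
import Mathlib

section
/- Let g : ℝ → ℝ be g(θ) = (1+θ)/√(1+θ²). For all reals a, b ≥ 0, |g(a) − g(b)| ≤ |a − b|; that is, g is 1-Lipschitz on [0,∞). -/
noncomputable def g (θ : ℝ) : ℝ := (1 + θ) / Real.sqrt (1 + θ ^ 2)

noncomputable def g' (θ : ℝ) : ℝ := (1 - θ) / (1 + θ ^ 2) / Real.sqrt (1 + θ ^ 2)

lemma one_add_sq_pos (x : ℝ) : (0:ℝ) < 1 + x ^ 2 := by positivity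

lemma g_hasDerivAt (x : ℝ) : HasDerivAt g (g' x) x := by
  have hpos : (0:ℝ) < 1 + x ^ 2 := one_add_sq_pos x
  have hsq : (0:ℝ) < Real.sqrt (1 + x ^ 2) := Real.sqrt_pos.mpr hpos
  have h1 : HasDerivAt (fun t : ℝ => 1 + t ^ 2) (2 * x) x := by
    simpa using ((hasDerivAt_pow 2 x).const_add 1)
  have h2 : HasDerivAt (fun t : ℝ => Real.sqrt (1 + t ^ 2))
      (2 * x / (2 * Real.sqrt (1 + x ^ 2))) x :=
    (Real.hasDerivAt_sqrt hpos.ne').comp x h1 |>.congr_deriv (by ring)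
  have h3 : HasDerivAt (fun t : ℝ => 1 + t) 1 x := by
    simpa using (hasDerivAt_id x).const_add 1
  have h4 := h3.div h2 hsq.ne'
  have : HasDerivAt g
      ((1 * Real.sqrt (1 + x ^ 2) - (1 + x) * (2 * x / (2 * Real.sqrt (1 + x ^ 2)))) /
        Real.sqrt (1 + x ^ 2) ^ 2) x := h4
  convert this using 1
  have hs2 : Real.sqrt (1 + x ^ 2) ^ 2 = 1 + x ^ 2 := Real.sq_sqrt hpos.le
  unfold g'
  field_simp
  linear_combination (-(x+x^2)) * hs2

lemma g'_bound {x : ℝ} (hx : 0 ≤ x) : ‖g' x‖ ≤ 1 := by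
  have hpos : (0:ℝ) < 1 + x ^ 2 := one_add_sq_pos x
  have hsq : (1:ℝ) ≤ Real.sqrt (1 + x ^ 2) := by
    nlinarith [Real.sq_sqrt hpos.le, Real.sqrt_nonneg (1+x^2)]
  rw [Real.norm_eq_abs, g', abs_div, abs_div, abs_of_pos hpos,
    abs_of_pos (lt_of_lt_of_le one_pos hsq)]
  have h1 : |1 - x| ≤ 1 + x ^ 2 := by
    rcases abs_cases (1 - x) with ⟨h, _⟩ | ⟨h, _⟩ <;> nlinarith
  calc |1 - x| / (1 + x ^ 2) / Real.sqrt (1 + x ^ 2)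
      ≤ 1 / 1 := by
        apply div_le_div₀ (by norm_num) _ one_pos hsq
        exact div_le_one_of_le₀ h1 hpos.le
    _ = 1 := by norm_num

theorem g_lipschitz_on_nonneg (a b : ℝ) (ha : 0 ≤ a) (hb : 0 ≤ b) :
    |g a - g b| ≤ |a - b| := by
  have := (convex_Ici (0:ℝ)).norm_image_sub_le_of_norm_hasDerivWithin_le
    (f := g) (f' := g') (C := 1)
    (fun x hx => (g_hasDerivAt x).hasDerivWithinAt)
    (fun x hx => g'_bound hx) hb ha
  simpa [Real.norm_eq_abs] using this
end

section
/- Let g : ℝ → ℝ be g(θ) = (1+θ)/√(1+θ²), N ≥ 1 an integer, x ∈ ℝ, and u, v : Fin N → ℝ with values in [0,1]. Define h(c) = (∏_{l=1}^N g(u_l·c·v_l))·x. Then for every c ∈ [0,1], |h′(c)| ≤ (√2)^(N−1) · |x| · Σ_{i=1}^N u_i·v_i. -/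
noncomputable def gd (θ : ℝ) : ℝ := (1 - θ) / ((1 + θ ^ 2) * Real.sqrt (1 + θ ^ 2))

lemma hasDerivAt_g (θ : ℝ) : HasDerivAt g (gd θ) θ := by
  have pos : (0 : ℝ) < 1 + θ ^ 2 := by positivity
  have spos : 0 < Real.sqrt (1 + θ ^ 2) := Real.sqrt_pos.2 pos
  have hinner : HasDerivAt (fun t : ℝ => 1 + t ^ 2) (2 * θ) θ := by
    simpa using ((hasDerivAt_pow 2 θ).const_add 1)
  have hs : HasDerivAt (fun t : ℝ => Real.sqrt (1 + t ^ 2))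
      (θ / Real.sqrt (1 + θ ^ 2)) θ := by
    have := (Real.hasDerivAt_sqrt (ne_of_gt pos)).comp θ hinner
    refine this.congr_deriv ?_
    rw [div_mul_eq_mul_div, one_mul, mul_div_mul_left _ _ two_ne_zero]
  have h1 : HasDerivAt (fun t : ℝ => 1 + t) 1 θ := by
    simpa using (hasDerivAt_id θ).const_add 1
  have := h1.div hs (ne_of_gt spos)
  refine this.congr_deriv ?_
  have hsq : Real.sqrt (1 + θ ^ 2) ^ 2 = 1 + θ ^ 2 := Real.sq_sqrt pos.le
  rw [gd]
  field_simp
  rw [hsq]; ring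

lemma g_nonneg {θ : ℝ} (hθ : 0 ≤ θ) : 0 ≤ g θ := by
  unfold g; positivity

lemma g_le {θ : ℝ} (hθ : 0 ≤ θ) : g θ ≤ Real.sqrt 2 := by
  rw [g, div_le_iff₀ (Real.sqrt_pos.2 (by positivity))]
  rw [← Real.sqrt_mul (by norm_num)]
  have : (1 + θ) = Real.sqrt ((1 + θ) ^ 2) := (Real.sqrt_sq (by linarith)).symm
  rw [this]
  apply Real.sqrt_le_sqrt
  nlinarith [sq_nonneg (1 - θ)]

lemma gd_abs_le {θ : ℝ} (hθ : θ ∈ Set.Icc (0 : ℝ) 1) : |gd θ| ≤ 1 := by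
  obtain ⟨h0, h1⟩ := hθ
  have hs : (1 : ℝ) ≤ Real.sqrt (1 + θ ^ 2) := by
    nlinarith [Real.sq_sqrt (show (0:ℝ) ≤ 1 + θ ^ 2 by positivity),
      Real.sqrt_nonneg (1 + θ ^ 2)]
  have hd : (1 : ℝ) ≤ (1 + θ ^ 2) * Real.sqrt (1 + θ ^ 2) := by nlinarith
  rw [gd, abs_div, abs_of_nonneg (by linarith : (0:ℝ) ≤ 1 - θ),
    abs_of_nonneg (by linarith : (0:ℝ) ≤ (1 + θ ^ 2) * Real.sqrt (1 + θ ^ 2))]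
  rw [div_le_one (by linarith)]
  linarith

theorem deriv_central_bound (N : ℕ) (hN : 1 ≤ N) (x : ℝ) (u v : Fin N → ℝ)
    (hu : ∀ l, u l ∈ Set.Icc (0 : ℝ) 1) (hv : ∀ l, v l ∈ Set.Icc (0 : ℝ) 1)
    (c : ℝ) (hc : c ∈ Set.Icc (0 : ℝ) 1) :
    |deriv (fun c : ℝ => (∏ l, g (u l * c * v l)) * x) c| ≤
      Real.sqrt 2 ^ (N - 1) * |x| * ∑ i, u i * v i := by
  have hθ : ∀ l, u l * c * v l ∈ Set.Icc (0 : ℝ) 1 := fun l => by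
    obtain ⟨hu0, hu1⟩ := hu l; obtain ⟨hv0, hv1⟩ := hv l
    obtain ⟨hc0, hc1⟩ := hc
    constructor
    · positivity
    · exact mul_le_one₀ (mul_le_one₀ hu1 hc0 hc1) hv0 hv1
  have hfi : ∀ i : Fin N, HasDerivAt (fun c : ℝ => g (u i * c * v i))
      (u i * v i * gd (u i * c * v i)) c := by
    intro i
    have hlin : HasDerivAt (fun c : ℝ => u i * c * v i) (u i * v i) c := by
      simpa using (((hasDerivAt_id c).const_mul (u i)).mul_const (v i))
    have := (hasDerivAt_g (u i * c * v i)).comp c hlin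
    simpa [mul_comm, Function.comp_def] using this
  have hprod : HasDerivAt (fun c : ℝ => (∏ l, g (u l * c * v l)) * x)
      ((∑ i, (∏ j ∈ Finset.univ.erase i, g (u j * c * v j)) •
        (u i * v i * gd (u i * c * v i))) * x) c :=
    (HasDerivAt.fun_finsetProd (fun i _ => hfi i)).mul_const x
  rw [hprod.deriv]
  have hperase : ∀ i : Fin N,
      |∏ j ∈ Finset.univ.erase i, g (u j * c * v j)| ≤ Real.sqrt 2 ^ (N - 1) := by
    intro i
    have h1 : |∏ j ∈ Finset.univ.erase i, g (u j * c * v j)| =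
        ∏ j ∈ Finset.univ.erase i, g (u j * c * v j) :=
      abs_of_nonneg (Finset.prod_nonneg fun j _ => g_nonneg (hθ j).1)
    rw [h1]
    calc ∏ j ∈ Finset.univ.erase i, g (u j * c * v j)
        ≤ ∏ _j ∈ Finset.univ.erase i, Real.sqrt 2 :=
          Finset.prod_le_prod (fun j _ => g_nonneg (hθ j).1) (fun j _ => g_le (hθ j).1)
      _ = Real.sqrt 2 ^ (N - 1) := by
          rw [Finset.prod_const, Finset.card_erase_of_mem (Finset.mem_univ i),
            Finset.card_univ, Fintype.card_fin]
  calc |(∑ i, (∏ j ∈ Finset.univ.erase i, g (u j * c * v j)) •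
        (u i * v i * gd (u i * c * v i))) * x|
      ≤ (∑ i, |(∏ j ∈ Finset.univ.erase i, g (u j * c * v j)) *
        (u i * v i * gd (u i * c * v i))|) * |x| := by
        rw [abs_mul]
        gcongr
        exact Finset.abs_sum_le_sum_abs _ _
    _ ≤ (∑ i, Real.sqrt 2 ^ (N - 1) * (u i * v i)) * |x| := by
        gcongr with i _
        rw [abs_mul, abs_mul]
        have h1 := hperase i
        have h2 : |u i * v i| = u i * v i :=
          abs_of_nonneg (mul_nonneg (hu i).1 (hv i).1)
        have h3 := gd_abs_le (hθ i)
        calc |∏ j ∈ Finset.univ.erase i, g (u j * c * v j)| * (|u i * v i| * |gd (u i * c * v i)|)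
            ≤ Real.sqrt 2 ^ (N - 1) * ((u i * v i) * 1) := by
              rw [h2]
              exact mul_le_mul h1
                (mul_le_mul_of_nonneg_left h3 (mul_nonneg (hu i).1 (hv i).1))
                (mul_nonneg (mul_nonneg (hu i).1 (hv i).1) (abs_nonneg _))
                (by positivity)
          _ = Real.sqrt 2 ^ (N - 1) * (u i * v i) := by ring
    _ = Real.sqrt 2 ^ (N - 1) * |x| * ∑ i, u i * v i := by
        rw [← Finset.mul_sum]; ring
end
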